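/- arXiv:1503.08808 — 3 statements merged into one kernel-verified Lean document; each statement's English description precedes it below -/
import Mathlib

section
/- In the setting of the linear control system X' = A(t)X + B(t)U(t) on [t₀,t₁] with X(t₀)=0, let Υ(U) := X_U(t₁) denote the endpoint map on continuous controls U : [t₀,t₁] → ℝ^r. Then a covector ρ₁ ∈ ℝⁿ annihilates the range of Υ if and only if the solution ρ(t) of the adjoint equation ρ' = −A(t)ᵀρ with ρ(t₁) = ρ₁ satisfies B(t)ᵀ ρ(t) = 0 for all t ∈ [t₀,t₁]. -/
open Set Matrix

lemma mulVec_norm_le' {n m : ℕ} (A : Matrix (Fin n) (Fin m) ℝ) {K : ℝ} (hK : 0 ≤ K)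
    (h : ∀ i j, |A i j| ≤ K) (v : Fin m → ℝ) : ‖A.mulVec v‖ ≤ ((m : ℝ) * K) * ‖v‖ := by
  rw [pi_norm_le_iff_of_nonneg (by positivity)]
  intro i
  calc ‖A.mulVec v i‖ = ‖∑ j, A i j * v j‖ := rfl
    _ ≤ ∑ j, ‖A i j * v j‖ := norm_sum_le _ _
    _ ≤ ∑ _j : Fin m, K * ‖v‖ := by
        refine Finset.sum_le_sum fun j _ => ?_
        rw [norm_mul]
        exact mul_le_mul (h i j) (norm_le_pi_norm v j) (norm_nonneg _) hK
    _ = (m : ℝ) * K * ‖v‖ := by simp [Finset.sum_const, mul_assoc]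

-- entrywise bound from continuity on compact
lemma exists_entry_bound {n m : ℕ} (a b : ℝ) (M : ℝ → Matrix (Fin n) (Fin m) ℝ)
    (hM : ContinuousOn M (Icc a b)) :
    ∃ K : ℝ, 0 ≤ K ∧ ∀ t ∈ Icc a b, ∀ i j, |M t i j| ≤ K := by
  have hc : ContinuousOn (fun t => (of.symm (M t))) (Icc a b) := hM
  obtain ⟨C, hC⟩ := isCompact_Icc.exists_bound_of_continuousOn hc
  refine ⟨max C 0, le_max_right _ _, fun t ht i j => ?_⟩
  calc |M t i j| = ‖M t i j‖ := rfl
    _ ≤ ‖(of.symm (M t))‖ := by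
        refine (norm_le_pi_norm (M t i) j).trans (norm_le_pi_norm _ i)
    _ ≤ max C 0 := le_trans (hC t ht) (le_max_left _ _)

lemma hasDerivWithinAt_singleton' {E : Type*} [NormedAddCommGroup E] [NormedSpace ℝ E]
    (f : ℝ → E) (c : E) (x : ℝ) : HasDerivWithinAt f c {x} x := by
  simp only [HasDerivWithinAt, nhdsWithin_singleton, hasDerivAtFilter_iff_isLittleO,
    Filter.prod_pure_pure, Asymptotics.isLittleO_pure, sub_self, zero_smul, smul_zero]

lemma hasDerivWithinAt_of_nmem_closure' {E : Type*} [NormedAddCommGroup E] [NormedSpace ℝ E]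
    {f : ℝ → E} {c : E} {s : Set ℝ} {x : ℝ} (h : x ∉ closure s) :
    HasDerivWithinAt f c s x := by
  have := (HasFDerivWithinAt.of_notMem_closure
    (f := f) (f' := ContinuousLinearMap.smulRight (1 : ℝ →L[ℝ] ℝ) c) h).hasDerivWithinAt
  simpa using this

/-- Global existence for linear ODEs `x' = M t * x + f t` on a compact interval. -/
lemma exists_linear_ode {n : ℕ} {a b : ℝ} (hab : a ≤ b)
    (M : ℝ → Matrix (Fin n) (Fin n) ℝ) (f : ℝ → Fin n → ℝ)
    (hM : ContinuousOn M (Icc a b)) (hf : ContinuousOn f (Icc a b)) (x₀ : Fin n → ℝ) :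
    ∃ x : ℝ → Fin n → ℝ, x a = x₀ ∧ ∀ t ∈ Icc a b,
      HasDerivWithinAt x ((M t).mulVec (x t) + f t) (Icc a b) t := by
  classical
  set v : ℝ → (Fin n → ℝ) → (Fin n → ℝ) := fun t x => (M t).mulVec x + f t with hv
  obtain ⟨K₀, hK₀, hK₀M⟩ := exists_entry_bound a b M hM
  set K : ℝ := (n : ℝ) * K₀ with hKdef
  have hK : 0 ≤ K := by positivity
  have hMv : ∀ t ∈ Icc a b, ∀ w : Fin n → ℝ, ‖(M t).mulVec w‖ ≤ K * ‖w‖ := fun t ht w =>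
    mulVec_norm_le' (M t) hK₀ (hK₀M t ht) w
  obtain ⟨F₁, hF₁⟩ := isCompact_Icc.exists_bound_of_continuousOn hf
  set F₀ : ℝ := max F₁ 0 with hF₀def
  have hF₀ : 0 ≤ F₀ := le_max_right _ _
  have hfF : ∀ t ∈ Icc a b, ‖f t‖ ≤ F₀ := fun t ht => (hF₁ t ht).trans (le_max_left _ _)
  have hvnorm : ∀ t ∈ Icc a b, ∀ w : Fin n → ℝ, ‖v t w‖ ≤ K * ‖w‖ + F₀ := by
    intro t ht w
    exact (norm_add_le _ _).trans (add_le_add (hMv t ht w) (hfF t ht))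
  set Mb : ℝ := gronwallBound ‖x₀‖ K F₀ (b - a) with hMbdef
  have hMb0 : ‖x₀‖ ≤ Mb := by
    have := gronwallBound_mono (norm_nonneg x₀) hF₀ hK (by linarith : (0:ℝ) ≤ b - a)
    rwa [gronwallBound_x0] at this
  have hMb : 0 ≤ Mb := le_trans (norm_nonneg _) hMb0
  set C₀ : ℝ := K * (Mb + 1) + F₀ with hC₀def
  have hC₀ : 0 ≤ C₀ := by positivity
  set δ : ℝ := 1 / (C₀ + 1) with hδdef
  have hδ : 0 < δ := by positivity
  -- a priori bound via Gronwall
  have apriori : ∀ s ∈ Icc a b, ∀ x : ℝ → Fin n → ℝ, x a = x₀ →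
      (∀ t ∈ Icc a s, HasDerivWithinAt x (v t (x t)) (Icc a s) t) →
      ∀ t ∈ Icc a s, ‖x t‖ ≤ Mb := by
    intro s hs x hxa hx
    have hcont : ContinuousOn x (Icc a s) := fun t ht => (hx t ht).continuousWithinAt
    have key := norm_le_gronwallBound_of_norm_deriv_right_le (f := x)
      (f' := fun t => v t (x t)) (δ := ‖x₀‖) (K := K) (ε := F₀) (a := a) (b := s)
      hcont
      (fun t ht => (hx t (Ico_subset_Icc_self ht)).mono_of_mem_nhdsWithin
        (Icc_mem_nhdsGE_of_mem ht))
      (by rw [hxa])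
      (fun t ht => hvnorm t ⟨ht.1, ht.2.le.trans hs.2⟩ (x t))
    intro t ht
    refine (key t ht).trans (gronwallBound_mono (norm_nonneg x₀) hF₀ hK ?_)
    have := ht.2.trans hs.2
    linarith [ht.1]
  -- one Picard-Lindelöf step
  have step : ∀ s, a ≤ s → s < b → ∀ c : Fin n → ℝ, ‖c‖ ≤ Mb →
      ∃ y : ℝ → Fin n → ℝ, y s = c ∧ ∀ t ∈ Icc s (min (s + δ) b),
        HasDerivWithinAt y (v t (y t)) (Icc s (min (s + δ) b)) t := by
    intro s has hsb c hc
    set s' : ℝ := min (s + δ) b with hs'def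
    have hss' : s ≤ s' := le_min (by linarith) hsb.le
    have hsub : Icc s s' ⊆ Icc a b := Icc_subset_Icc has (min_le_right _ _)
    have hpl : IsPicardLindelof v (tmin := s) (tmax := s') ⟨s, le_rfl, hss'⟩ c 1 0
        (Real.toNNReal C₀) (Real.toNNReal K) := by
      refine ⟨?_, ?_, ?_, ?_⟩
      · intro t ht
        refine LipschitzOnWith.of_dist_le_mul fun x _ y _ => ?_
        rw [dist_eq_norm, dist_eq_norm]
        have : v t x - v t y = (M t).mulVec (x - y) := by
          simp [hv, Matrix.mulVec_sub]
        rw [this, Real.coe_toNNReal K hK]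
        exact hMv t (hsub ht) _
      · intro x _
        have hg : Continuous fun P : Matrix (Fin n) (Fin n) ℝ => P.mulVec x :=
          continuous_id.matrix_mulVec continuous_const
        exact ((hg.comp_continuousOn (hM.mono hsub)).add (hf.mono hsub))
      · intro t ht x hx
        have hxn : ‖x‖ ≤ Mb + 1 := by
          have := mem_closedBall_iff_norm.mp hx
          push_cast at this
          calc ‖x‖ ≤ ‖x - c‖ + ‖c‖ := by
                have := norm_add_le (x - c) c; simpa using this
            _ ≤ Mb + 1 := by linarith
        calc ‖v t x‖ ≤ K * ‖x‖ + F₀ := hvnorm t (hsub ht) x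
          _ ≤ K * (Mb + 1) + F₀ := by nlinarith
          _ ≤ _ := Real.le_coe_toNNReal _
      · show (Real.toNNReal C₀ : ℝ) * max (s' - s) (s - s) ≤ ((1 : NNReal) : ℝ) - ((0 : NNReal) : ℝ)
        rw [Real.coe_toNNReal C₀ hC₀, NNReal.coe_one, NNReal.coe_zero, sub_zero]
        have h1 : max (s' - s) (s - s) = s' - s := by
          rw [sub_self]; exact max_eq_left (by linarith)
        rw [h1]
        have h2 : s' - s ≤ δ := by
          have : s' ≤ s + δ := min_le_left _ _
          linarith
        calc C₀ * (s' - s) ≤ C₀ * δ := by nlinarith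
          _ = C₀ / (C₀ + 1) := by rw [hδdef]; ring
          _ ≤ 1 := by rw [div_le_one (by linarith)]; linarith
    obtain ⟨y, hy0, hy⟩ := hpl.exists_eq_forall_mem_Icc_hasDerivWithinAt₀
    exact ⟨y, hy0, hy⟩
  -- induction on the number of steps
  have main : ∀ k : ℕ, ∃ x : ℝ → Fin n → ℝ, x a = x₀ ∧
      ∀ t ∈ Icc a (min (a + k * δ) b),
        HasDerivWithinAt x (v t (x t)) (Icc a (min (a + k * δ) b)) t := by
    intro k
    induction k with
    | zero =>
      have hmin : min (a + (0 : ℕ) * δ) b = a := by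
        rw [Nat.cast_zero, zero_mul, add_zero]; exact min_eq_left hab
      rw [hmin]
      refine ⟨fun _ => x₀, rfl, fun t ht => ?_⟩
      rw [Icc_self] at ht ⊢
      rw [mem_singleton_iff] at ht
      subst ht
      exact hasDerivWithinAt_singleton' _ _ _
    | succ k ih =>
      obtain ⟨x, hxa, hx⟩ := ih
      by_cases hsb : b ≤ a + k * δ
      · have h1 : min (a + k * δ) b = b := min_eq_right hsb
        have h2 : min (a + (k + 1 : ℕ) * δ) b = b := by
          refine min_eq_right ?_
          push_cast
          nlinarith
        rw [h2]; rw [h1] at hx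
        exact ⟨x, hxa, hx⟩
      · push_neg at hsb
        set s : ℝ := a + k * δ with hsdef
        have has : a ≤ s := by
          have : (0:ℝ) ≤ k * δ := by positivity
          linarith
        have hminW : min (a + k * δ) b = s := min_eq_left hsb.le
        rw [hminW] at hx
        have hsIcc : s ∈ Icc a b := ⟨has, hsb.le⟩
        have hxs : ‖x s‖ ≤ Mb :=
          apriori s hsIcc x hxa hx s ⟨has, le_rfl⟩
        obtain ⟨y, hys, hy⟩ := step s has hsb (x s) hxs
        set s' : ℝ := min (s + δ) b with hs'def
        have hss' : s ≤ s' := le_min (by linarith) hsb.le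
        have hmin2 : min (a + (k + 1 : ℕ) * δ) b = s' := by
          rw [hs'def, hsdef]
          congr 1
          push_cast
          ring
        rw [hmin2]
        set z : ℝ → Fin n → ℝ := fun t => if t ≤ s then x t else y t with hzdef
        have hzx : ∀ u ∈ Icc a s, z u = x u := fun u hu => if_pos hu.2
        have hzy : ∀ u ∈ Icc s s', z u = y u := by
          intro u hu
          by_cases h : u ≤ s
          · have hus : u = s := le_antisymm h hu.1
            subst hus
            simp [hzdef, hys]
          · exact if_neg h
        have hunion : Icc a s ∪ Icc s s' = Icc a s' := Icc_union_Icc_eq_Icc has hss'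
        refine ⟨z, ?_, ?_⟩
        · rw [hzx a ⟨le_rfl, has⟩, hxa]
        · intro t ht
          have claim1 : HasDerivWithinAt z (v t (z t)) (Icc a s) t := by
            by_cases hts : t ≤ s
            · have htI : t ∈ Icc a s := ⟨ht.1, hts⟩
              have := (hx t htI).congr hzx (hzx t htI)
              rwa [hzx t htI]
            · push_neg at hts
              refine hasDerivWithinAt_of_nmem_closure' ?_
              rw [closure_Icc]
              intro hmem
              exact absurd hmem.2 (not_le.mpr hts)
          have claim2 : HasDerivWithinAt z (v t (z t)) (Icc s s') t := by
            by_cases hts : s ≤ t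
            · have htI : t ∈ Icc s s' := ⟨hts, ht.2⟩
              have := (hy t htI).congr hzy (hzy t htI)
              rwa [hzy t htI]
            · push_neg at hts
              refine hasDerivWithinAt_of_nmem_closure' ?_
              rw [closure_Icc]
              intro hmem
              exact absurd hmem.1 (not_le.mpr hts)
          rw [← hunion]
          exact claim1.union claim2
  -- conclude: pick k large enough
  obtain ⟨k, hk⟩ := exists_nat_ge ((b - a) / δ)
  have hbk : b ≤ a + k * δ := by
    rw [div_le_iff₀ hδ] at hk
    linarith
  obtain ⟨x, hxa, hx⟩ := main k
  rw [min_eq_right hbk] at hx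
  exact ⟨x, hxa, hx⟩

lemma dot_deriv {n : ℕ} {ρ X : ℝ → Fin n → ℝ} {p q : Fin n → ℝ} {s : Set ℝ} {t : ℝ}
    (hρ : HasDerivWithinAt ρ p s t) (hX : HasDerivWithinAt X q s t) :
    HasDerivWithinAt (fun u => dotProduct (ρ u) (X u))
      (dotProduct p (X t) + dotProduct (ρ t) q) s t := by
  have h1 := hasDerivWithinAt_pi.mp hρ
  have h2 := hasDerivWithinAt_pi.mp hX
  have := HasDerivWithinAt.sum (u := Finset.univ)
    (A := fun i u => ρ u i * X u i) (A' := fun i => p i * X t i + ρ t i * q i)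
    (fun i _ => (h1 i).mul (h2 i))
  rw [show (fun u => ρ u ⬝ᵥ X u) = ∑ i, fun u => ρ u i * X u i by ext u; simp [dotProduct]]
  exact this.congr_deriv (by simp [dotProduct, Finset.sum_add_distrib])

/-- Proposition 2.4 (ODE form): a covector `ρ₁` annihilates the range of the
endpoint map `U ↦ X_U(t₁)` of the linear control system `X' = A(t)X + B(t)U(t)`,
`X(t₀) = 0`, iff the solution `ρ` of the adjoint equation `ρ' = -A(t)ᵀρ` with
`ρ(t₁) = ρ₁` satisfies `B(t)ᵀ ρ(t) = 0` for all `t ∈ [t₀,t₁]`. -/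
theorem stmt_6 (n r : ℕ) (t₀ t₁ : ℝ) (ht : t₀ < t₁)
    (A : ℝ → Matrix (Fin n) (Fin n) ℝ) (B : ℝ → Matrix (Fin n) (Fin r) ℝ)
    (hA : ContinuousOn A (Icc t₀ t₁)) (hB : ContinuousOn B (Icc t₀ t₁))
    (ρ₁ : Fin n → ℝ) :
    (∀ U : ℝ → Fin r → ℝ, ContinuousOn U (Icc t₀ t₁) →
      ∀ X : ℝ → Fin n → ℝ,
        (∀ t ∈ Icc t₀ t₁,
          HasDerivWithinAt X ((A t).mulVec (X t) + (B t).mulVec (U t)) (Icc t₀ t₁) t) →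
        X t₀ = 0 → dotProduct ρ₁ (X t₁) = 0) ↔
    (∀ ρ : ℝ → Fin n → ℝ,
      (∀ t ∈ Icc t₀ t₁,
        HasDerivWithinAt ρ (-((A t)ᵀ.mulVec (ρ t))) (Icc t₀ t₁) t) →
      ρ t₁ = ρ₁ → ∀ t ∈ Icc t₀ t₁, (B t)ᵀ.mulVec (ρ t) = 0) := by
  constructor
  · -- forward direction
    intro L ρ hρ hρ1
    have hρcont : ContinuousOn ρ (Icc t₀ t₁) := fun t htm => (hρ t htm).continuousWithinAt
    have hBT : ContinuousOn (fun t => (B t)ᵀ) (Icc t₀ t₁) :=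
      (continuous_id.matrix_transpose).comp_continuousOn hB
    have hUcont : ContinuousOn (fun t => (B t)ᵀ.mulVec (ρ t)) (Icc t₀ t₁) := by
      have hmv : Continuous fun pq : Matrix (Fin r) (Fin n) ℝ × (Fin n → ℝ) =>
          pq.1.mulVec pq.2 := continuous_fst.matrix_mulVec continuous_snd
      exact hmv.comp_continuousOn (hBT.prodMk hρcont)
    have hBUcont : ContinuousOn (fun t => (B t).mulVec ((B t)ᵀ.mulVec (ρ t))) (Icc t₀ t₁) := by
      have hmv : Continuous fun pq : Matrix (Fin n) (Fin r) ℝ × (Fin r → ℝ) =>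
          pq.1.mulVec pq.2 := continuous_fst.matrix_mulVec continuous_snd
      exact hmv.comp_continuousOn (hB.prodMk hUcont)
    obtain ⟨X, hX0, hX⟩ := exists_linear_ode ht.le A
      (fun t => (B t).mulVec ((B t)ᵀ.mulVec (ρ t))) hA hBUcont 0
    have hend : dotProduct ρ₁ (X t₁) = 0 :=
      L (fun t => (B t)ᵀ.mulVec (ρ t)) hUcont X hX hX0
    have gderiv : ∀ t ∈ Icc t₀ t₁,
        HasDerivWithinAt (fun u => dotProduct (ρ u) (X u))
          (dotProduct ((B t)ᵀ.mulVec (ρ t)) ((B t)ᵀ.mulVec (ρ t))) (Icc t₀ t₁) t := by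
      intro t htm
      have h := dot_deriv (hρ t htm) (hX t htm)
      convert h using 1
      have e1 : dotProduct (ρ t) ((A t).mulVec (X t))
          = dotProduct ((A t)ᵀ.mulVec (ρ t)) (X t) := by
        rw [dotProduct_mulVec, Matrix.mulVec_transpose]
      have e2 : dotProduct (ρ t) ((B t).mulVec ((B t)ᵀ.mulVec (ρ t)))
          = dotProduct ((B t)ᵀ.mulVec (ρ t)) ((B t)ᵀ.mulVec (ρ t)) := by
        rw [dotProduct_mulVec, Matrix.mulVec_transpose]
      rw [dotProduct_add, e1, e2, neg_dotProduct]
      ring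
    have gcont : ContinuousOn (fun u => dotProduct (ρ u) (X u)) (Icc t₀ t₁) :=
      fun t htm => (gderiv t htm).continuousWithinAt
    have hgmono : MonotoneOn (fun u => dotProduct (ρ u) (X u)) (Icc t₀ t₁) := by
      apply monotoneOn_of_deriv_nonneg (convex_Icc t₀ t₁) gcont
      · intro x hx
        rw [interior_Icc] at hx
        exact ((gderiv x ⟨hx.1.le, hx.2.le⟩).hasDerivAt
          (Icc_mem_nhds hx.1 hx.2)).differentiableAt.differentiableWithinAt
      · intro x hx
        rw [interior_Icc] at hx
        have hd := (gderiv x ⟨hx.1.le, hx.2.le⟩).hasDerivAt (Icc_mem_nhds hx.1 hx.2)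
        rw [hd.deriv]
        exact Finset.sum_nonneg fun i _ => mul_self_nonneg _
    have gt₀ : dotProduct (ρ t₀) (X t₀) = 0 := by rw [hX0, dotProduct_zero]
    have gt₁ : dotProduct (ρ t₁) (X t₁) = 0 := by rw [hρ1]; exact hend
    have gzero : ∀ u ∈ Icc t₀ t₁, dotProduct (ρ u) (X u) = 0 := by
      intro u hu
      have h1 : dotProduct (ρ u) (X u) ≤ 0 := by
        have := hgmono hu (right_mem_Icc.mpr ht.le) hu.2
        simpa [gt₁] using this
      have h2 : (0:ℝ) ≤ dotProduct (ρ u) (X u) := by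
        have := hgmono (left_mem_Icc.mpr ht.le) hu hu.1
        simpa [gt₀] using this
      linarith
    intro t htm
    have h0 : HasDerivWithinAt (fun u => dotProduct (ρ u) (X u)) 0 (Icc t₀ t₁) t :=
      (hasDerivWithinAt_const t _ (0:ℝ)).congr (fun u hu => gzero u hu) (gzero t htm)
    have hud : UniqueDiffWithinAt ℝ (Icc t₀ t₁) t := (uniqueDiffOn_Icc ht) t htm
    have hsum : dotProduct ((B t)ᵀ.mulVec (ρ t)) ((B t)ᵀ.mulVec (ρ t)) = 0 :=
      ((gderiv t htm).derivWithin hud).symm.trans (h0.derivWithin hud)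
    funext i
    have hz := (Finset.sum_eq_zero_iff_of_nonneg
      (fun j _ => mul_self_nonneg ((B t)ᵀ.mulVec (ρ t) j))).mp hsum i (Finset.mem_univ i)
    exact mul_self_eq_zero.mp hz
  · -- backward direction
    intro H U hU X hX hX0
    have hmaps : MapsTo (fun s => t₀ + t₁ - s) (Icc t₀ t₁) (Icc t₀ t₁) := by
      intro s hs
      refine ⟨?_, ?_⟩
      · show t₀ ≤ t₀ + t₁ - s
        linarith [hs.2]
      · show t₀ + t₁ - s ≤ t₁
        linarith [hs.1]
    have hMc : ContinuousOn (fun s => (A (t₀ + t₁ - s))ᵀ) (Icc t₀ t₁) := by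
      have h1 : ContinuousOn (fun s => A (t₀ + t₁ - s)) (Icc t₀ t₁) :=
        hA.comp ((continuous_const.sub continuous_id).continuousOn) hmaps
      exact (continuous_id.matrix_transpose).comp_continuousOn h1
    obtain ⟨σ, hσ0, hσ⟩ := exists_linear_ode ht.le (fun s => (A (t₀ + t₁ - s))ᵀ)
      (fun _ => (0 : Fin n → ℝ)) hMc continuousOn_const ρ₁
    have hρt1 : σ (t₀ + t₁ - t₁) = ρ₁ := by
      have e : t₀ + t₁ - t₁ = t₀ := by ring
      rw [e]; exact hσ0
    have hρderiv : ∀ t ∈ Icc t₀ t₁, HasDerivWithinAt (fun u => σ (t₀ + t₁ - u))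
        (-((A t)ᵀ.mulVec (σ (t₀ + t₁ - t)))) (Icc t₀ t₁) t := by
      intro t htm
      have hφ : HasDerivWithinAt (fun u : ℝ => t₀ + t₁ - u) (-1) (Icc t₀ t₁) t := by
        simpa using (hasDerivWithinAt_id t (Icc t₀ t₁)).const_sub (t₀ + t₁)
      have hm : t₀ + t₁ - t ∈ Icc t₀ t₁ := hmaps htm
      have hc := HasDerivWithinAt.scomp t (hσ _ hm) hφ hmaps
      have e : t₀ + t₁ - (t₀ + t₁ - t) = t := by ring
      rw [e] at hc
      exact hc.congr_deriv (by simp)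
    have hBρ := H (fun u => σ (t₀ + t₁ - u)) hρderiv hρt1
    have gderiv : ∀ t ∈ Icc t₀ t₁,
        HasDerivWithinAt (fun u => dotProduct (σ (t₀ + t₁ - u)) (X u))
          0 (Icc t₀ t₁) t := by
      intro t htm
      have h := dot_deriv (hρderiv t htm) (hX t htm)
      convert h using 1
      have e1 : dotProduct (σ (t₀ + t₁ - t)) ((A t).mulVec (X t))
          = dotProduct ((A t)ᵀ.mulVec (σ (t₀ + t₁ - t))) (X t) := by
        rw [dotProduct_mulVec, Matrix.mulVec_transpose]
      have e2 : dotProduct (σ (t₀ + t₁ - t)) ((B t).mulVec (U t))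
          = dotProduct ((B t)ᵀ.mulVec (σ (t₀ + t₁ - t))) (U t) := by
        rw [dotProduct_mulVec, Matrix.mulVec_transpose]
      rw [dotProduct_add, e1, e2, neg_dotProduct, hBρ t htm,
        zero_dotProduct]
      ring
    have gcont : ContinuousOn (fun u => dotProduct (σ (t₀ + t₁ - u)) (X u))
        (Icc t₀ t₁) := fun t htm => (gderiv t htm).continuousWithinAt
    have hconst := constant_of_has_deriv_right_zero gcont
      (fun y hy => (gderiv y (Ico_subset_Icc_self hy)).mono_of_mem_nhdsWithin
        (Icc_mem_nhdsGE_of_mem hy))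
    have h1 := hconst t₁ (right_mem_Icc.mpr ht.le)
    rw [hρt1] at h1
    rw [h1, hX0, dotProduct_zero]
end

section
/- With the linear control system X' = A(t)X + B(t)U(t), X(t₀)=0, the endpoint map Υ(U) = X_U(t₁) is surjective onto ℝⁿ if and only if the only covector ρ₁ ∈ ℝⁿ whose adjoint solution ρ(t) (ρ' = −Aᵀρ, ρ(t₁)=ρ₁) satisfies Bᵀρ ≡ 0 on [t₀,t₁] is ρ₁ = 0. -/
open Set Matrix

section Aux
variable {m p : ℕ}

/-- clamp each coordinate to `[-G, G]`. -/
noncomputable def clampV (G : ℝ) (x : Fin m → ℝ) : Fin m → ℝ := fun i => min G (max (-G) (x i))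

lemma clampV_lipschitz (G : ℝ) : LipschitzWith 1 (clampV (m := m) G) := by
  apply LipschitzWith.of_dist_le_mul
  intro x y
  rw [NNReal.coe_one, one_mul]
  refine (dist_pi_le_iff dist_nonneg).2 fun i => ?_
  have h1 : |min G (max (-G) (x i)) - min G (max (-G) (y i))| ≤ |x i - y i| := by
    refine (abs_min_sub_min_le_max _ _ _ _).trans ?_
    simp only [sub_self, abs_zero]
    refine max_le (abs_nonneg _) ?_
    calc |max (-G) (x i) - max (-G) (y i)| = |max (x i) (-G) - max (y i) (-G)| := by
          rw [max_comm (-G), max_comm (-G)]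
      _ ≤ |x i - y i| := abs_max_sub_max_le_abs _ _ _
  calc dist (clampV G x i) (clampV G y i) = |min G (max (-G) (x i)) - min G (max (-G) (y i))| := by
        rw [Real.dist_eq]; rfl
    _ ≤ |x i - y i| := h1
    _ = dist (x i) (y i) := (Real.dist_eq _ _).symm
    _ ≤ dist x y := dist_le_pi_dist x y i

lemma norm_clampV_le {G : ℝ} (hG : 0 ≤ G) (x : Fin m → ℝ) : ‖clampV G x‖ ≤ G := by
  refine (pi_norm_le_iff_of_nonneg hG).2 fun i => ?_
  rw [Real.norm_eq_abs, abs_le]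
  exact ⟨le_min (neg_le_self hG) (le_max_left _ _), min_le_left _ _⟩

lemma norm_clampV_le_norm {G : ℝ} (hG : 0 ≤ G) (x : Fin m → ℝ) : ‖clampV G x‖ ≤ ‖x‖ := by
  refine (pi_norm_le_iff_of_nonneg (norm_nonneg x)).2 fun i => ?_
  have hx : |x i| ≤ ‖x‖ := norm_le_pi_norm x i
  have h0 : (0 : ℝ) ≤ ‖x‖ := norm_nonneg _
  rw [Real.norm_eq_abs, abs_le]
  constructor
  · refine le_min (le_trans (by linarith) le_rfl) ?_
    have : -‖x‖ ≤ x i := by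
      have := neg_abs_le (x i); linarith
    exact this.trans (le_max_right _ _)
  · refine (min_le_right _ _).trans (max_le (by linarith) ?_)
    exact (le_abs_self _).trans hx

lemma clampV_eq_self {G : ℝ} {x : Fin m → ℝ} (h : ‖x‖ ≤ G) : clampV G x = x := by
  funext i
  have hx : |x i| ≤ G := (norm_le_pi_norm x i).trans h
  rw [abs_le] at hx
  simp only [clampV]
  rw [max_eq_right hx.1, min_eq_right hx.2]

lemma contOn_mulVec {s : Set ℝ} {M : ℝ → Matrix (Fin m) (Fin p) ℝ} {g : ℝ → Fin p → ℝ}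
    (hM : ContinuousOn M s) (hg : ContinuousOn g s) :
    ContinuousOn (fun t => (M t).mulVec (g t)) s := by
  apply continuousOn_pi.2
  intro i
  simp only [Matrix.mulVec, dotProduct]
  apply continuousOn_finset_sum
  intro j _
  have h1 : ContinuousOn (fun t => M t i j) s := by
    have : Continuous fun N : Matrix (Fin m) (Fin p) ℝ => N i j := continuous_id.matrix_elem i j
    exact this.comp_continuousOn hM
  exact h1.mul ((continuous_apply j).comp_continuousOn hg)

lemma norm_mulVec_le {M : Matrix (Fin m) (Fin p) ℝ} {K : ℝ} (hK : ∀ i j, |M i j| ≤ K)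
    (hK0 : 0 ≤ K) (x : Fin p → ℝ) : ‖M.mulVec x‖ ≤ (p * K) * ‖x‖ := by
  refine (pi_norm_le_iff_of_nonneg (by positivity)).2 fun i => ?_
  rw [Real.norm_eq_abs, Matrix.mulVec, dotProduct]
  calc |∑ j, M i j * x j| ≤ ∑ j, |M i j * x j| := Finset.abs_sum_le_sum_abs _ _
    _ ≤ ∑ _j : Fin p, K * ‖x‖ := by
        refine Finset.sum_le_sum fun j _ => ?_
        rw [abs_mul]
        exact mul_le_mul (hK i j) ((Real.norm_eq_abs _ ▸ norm_le_pi_norm x j)) (abs_nonneg _) hK0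
    _ = (p * K) * ‖x‖ := by simp [Finset.sum_const]; ring

end Aux

section B
variable {m : ℕ}

lemma matrix_entry_bound {a b : ℝ} (hab : a ≤ b) {M : ℝ → Matrix (Fin m) (Fin m) ℝ}
    (hM : ContinuousOn M (Icc a b)) :
    ∃ K : ℝ, 0 ≤ K ∧ ∀ t ∈ Icc a b, ∀ i j, |M t i j| ≤ K := by
  have hM' : ContinuousOn (fun t => (fun i j => M t i j : Fin m → Fin m → ℝ)) (Icc a b) := by
    refine continuousOn_pi.2 fun i => continuousOn_pi.2 fun j => ?_
    exact (continuous_id.matrix_elem i j).comp_continuousOn hM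
  obtain ⟨C, hC⟩ := (isCompact_Icc (a := a) (b := b)).exists_bound_of_continuousOn hM'
  refine ⟨max C 0, le_max_right _ _, fun t ht i j => ?_⟩
  set N : Fin m → Fin m → ℝ := fun i j => M t i j with hN
  have h2 : ‖N i‖ ≤ ‖N‖ := norm_le_pi_norm N i
  have h3 : |M t i j| ≤ ‖N i‖ := by
    have h4 := norm_le_pi_norm (N i) j
    rw [Real.norm_eq_abs] at h4
    exact h4
  exact (h3.trans h2).trans ((hC t ht).trans (le_max_left _ _))

lemma vec_bound {a b : ℝ} (hab : a ≤ b) {f : ℝ → Fin m → ℝ}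
    (hf : ContinuousOn f (Icc a b)) :
    ∃ F : ℝ, 0 ≤ F ∧ ∀ t ∈ Icc a b, ‖f t‖ ≤ F := by
  obtain ⟨C, hC⟩ := (isCompact_Icc (a := a) (b := b)).exists_bound_of_continuousOn hf
  exact ⟨max C 0, le_max_right _ _, fun t ht => (hC t ht).trans (le_max_left _ _)⟩

lemma gronwallBound_nonneg {δ K ε x : ℝ} (hδ : 0 ≤ δ) (hK : 0 < K) (hε : 0 ≤ ε) (hx : 0 ≤ x) :
    0 ≤ gronwallBound δ K ε x := by
  rw [gronwallBound_of_K_ne_0 hK.ne']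
  have h1 : (1 : ℝ) ≤ Real.exp (K * x) := Real.one_le_exp (by positivity)
  have h2 : (0:ℝ) ≤ ε / K := by positivity
  nlinarith [Real.exp_pos (K * x)]

lemma gronwallBound_mono' {δ K ε x y : ℝ} (hδ : 0 ≤ δ) (hK : 0 < K) (hε : 0 ≤ ε) (hxy : x ≤ y) :
    gronwallBound δ K ε x ≤ gronwallBound δ K ε y := by
  rw [gronwallBound_of_K_ne_0 hK.ne']
  dsimp only
  have h1 : Real.exp (K * x) ≤ Real.exp (K * y) :=
    Real.exp_le_exp.2 (by nlinarith)
  have h2 : (0:ℝ) ≤ ε / K := by positivity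
  nlinarith

/-- Global existence for linear ODEs on a compact interval. -/
lemma linear_ode_exists {a b : ℝ} (hab : a ≤ b)
    {M : ℝ → Matrix (Fin m) (Fin m) ℝ} {f : ℝ → Fin m → ℝ}
    (hM : ContinuousOn M (Icc a b)) (hf : ContinuousOn f (Icc a b)) (x₀ : Fin m → ℝ) :
    ∃ g : ℝ → Fin m → ℝ, g a = x₀ ∧ ∀ t ∈ Icc a b,
      HasDerivWithinAt g ((M t).mulVec (g t) + f t) (Icc a b) t := by
  obtain ⟨K, hK0, hKb⟩ := matrix_entry_bound hab hM
  obtain ⟨F, hF0, hFb⟩ := vec_bound hab hf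
  set Kn : ℝ := m * K + 1 with hKn
  have hKn0 : 0 < Kn := by positivity
  have hmK_le : (m : ℝ) * K ≤ Kn := by rw [hKn]; linarith
  set G : ℝ := gronwallBound ‖x₀‖ Kn F (b - a) with hG
  have hG0 : 0 ≤ G := gronwallBound_nonneg (norm_nonneg _) hKn0 hF0 (by linarith)
  set v : ℝ → (Fin m → ℝ) → (Fin m → ℝ) := fun t x => (M t).mulVec (clampV G x) + f t with hv
  set C : ℝ := (m * K) * G + F with hC
  have hC0 : 0 ≤ C := by positivity
  set R : ℝ := C * (b - a) + 1 with hR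
  have hlipt : ∀ t ∈ Icc a b, LipschitzWith ⟨Kn, hKn0.le⟩ (v t) := by
    intro t ht
    apply LipschitzWith.of_dist_le_mul
    intro x y
    have h1 : dist (v t x) (v t y) = ‖(M t).mulVec (clampV G x) - (M t).mulVec (clampV G y)‖ := by
      rw [hv]; simp only [dist_eq_norm]; abel_nf
    rw [h1, ← Matrix.mulVec_sub]
    calc ‖(M t).mulVec (clampV G x - clampV G y)‖
        ≤ (m * K) * ‖clampV G x - clampV G y‖ :=
          norm_mulVec_le (hKb t ht) hK0 _
      _ ≤ (m * K) * dist x y := by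
          have := (clampV_lipschitz (m := m) G).dist_le_mul x y
          rw [NNReal.coe_one, one_mul] at this
          rw [← dist_eq_norm]
          exact mul_le_mul_of_nonneg_left this (by positivity)
      _ ≤ Kn * dist x y := mul_le_mul_of_nonneg_right hmK_le dist_nonneg
  have hR0 : 0 ≤ R := by rw [hR]; nlinarith
  have hpl : IsPicardLindelof v (tmin := a) (tmax := b) ⟨a, le_refl a, hab⟩ x₀ ⟨R, hR0⟩ 0
      ⟨C, hC0⟩ ⟨Kn, hKn0.le⟩ :=
    { lipschitzOnWith := fun t ht => (hlipt t ht).lipschitzOnWith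
      continuousOn := fun x _ => (contOn_mulVec hM continuousOn_const).add hf
      norm_le := by
        intro t ht x _
        calc ‖v t x‖ ≤ ‖(M t).mulVec (clampV G x)‖ + ‖f t‖ := norm_add_le _ _
          _ ≤ (m * K) * G + F := by
              refine add_le_add ?_ (hFb t ht)
              calc ‖(M t).mulVec (clampV G x)‖ ≤ (m * K) * ‖clampV G x‖ :=
                    norm_mulVec_le (hKb t ht) hK0 _
                _ ≤ (m * K) * G := mul_le_mul_of_nonneg_left (norm_clampV_le hG0 x) (by positivity)
      mul_max_le := by
        simp only [NNReal.coe_mk, NNReal.coe_zero, sub_zero]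
        rw [sub_self, max_eq_left (by linarith : (0:ℝ) ≤ b - a)]
        show C * (b - a) ≤ R
        rw [hR]
        linarith }
  obtain ⟨g, hga, hgd⟩ := hpl.exists_eq_forall_mem_Icc_hasDerivWithinAt₀
  have hgc : ContinuousOn g (Icc a b) := fun t ht => (hgd t ht).continuousWithinAt
  have hbound : ∀ t ∈ Icc a b, ‖g t‖ ≤ gronwallBound ‖x₀‖ Kn F (t - a) := by
    apply norm_le_gronwallBound_of_norm_deriv_right_le hgc
    · intro x hx
      exact (hgd x (Ico_subset_Icc_self hx)).mono_of_mem_nhdsWithin (Icc_mem_nhdsGE_of_mem hx)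
    · rw [hga]
    · intro x hx
      have hx' := Ico_subset_Icc_self hx
      calc ‖v x (g x)‖ ≤ ‖(M x).mulVec (clampV G (g x))‖ + ‖f x‖ := norm_add_le _ _
        _ ≤ (m * K) * ‖clampV G (g x)‖ + F :=
            add_le_add (norm_mulVec_le (hKb x hx') hK0 _) (hFb x hx')
        _ ≤ (m * K) * ‖g x‖ + F := by
            have h5 := norm_clampV_le_norm hG0 (g x)
            have h0 : (0:ℝ) ≤ (m:ℝ) * K := by positivity
            nlinarith
        _ ≤ Kn * ‖g x‖ + F := by
            have := norm_nonneg (g x); nlinarith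
  have hGle : ∀ t ∈ Icc a b, ‖g t‖ ≤ G := by
    intro t ht
    refine (hbound t ht).trans ?_
    exact gronwallBound_mono' (norm_nonneg _) hKn0 hF0 (by linarith [ht.2])
  refine ⟨g, hga, fun t ht => ?_⟩
  have := hgd t ht
  rwa [show v t (g t) = (M t).mulVec (g t) + f t by
    rw [hv]; simp only; rw [clampV_eq_self (hGle t ht)]] at this
end B

section C
open Set Matrix
variable {m : ℕ}

lemma linear_ode_exists_backward {a b : ℝ} (hab : a ≤ b)
    {M : ℝ → Matrix (Fin m) (Fin m) ℝ} (hM : ContinuousOn M (Icc a b)) (ρ₁ : Fin m → ℝ) :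
    ∃ ρ : ℝ → Fin m → ℝ, ρ b = ρ₁ ∧ ∀ t ∈ Icc a b,
      HasDerivWithinAt ρ (-((M t).mulVec (ρ t))) (Icc a b) t := by
  have hrefl : ∀ t ∈ Icc a b, a + b - t ∈ Icc a b := by
    intro t ht; exact ⟨by linarith [ht.2], by linarith [ht.1]⟩
  have hMc : ContinuousOn (fun s => M (a + b - s)) (Icc a b) := by
    apply hM.comp (Continuous.continuousOn (by continuity))
    intro t ht; exact hrefl t ht
  obtain ⟨σ, hσa, hσd⟩ := linear_ode_exists hab (M := fun s => M (a + b - s))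
    (f := fun _ => (0 : Fin m → ℝ)) hMc continuousOn_const ρ₁
  refine ⟨fun t => σ (a + b - t), by simpa using hσa, fun t ht => ?_⟩
  have h1 : HasDerivWithinAt (fun s : ℝ => a + b - s) (-1) (Icc a b) t := by
    simpa using (hasDerivWithinAt_id t (Icc a b)).const_sub (a + b)
  have h2 := (hσd (a + b - t) (hrefl t ht)).scomp t h1 (fun s hs => hrefl s hs)
  have h3 : a + b - (a + b - t) = t := by ring
  rw [h3] at h2
  refine h2.congr_deriv ?_
  simp [Function.comp]

lemma hasDerivWithinAt_dot {ρ X : ℝ → Fin m → ℝ} {ρ' X' : Fin m → ℝ} {s : Set ℝ} {t : ℝ}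
    (hρ : HasDerivWithinAt ρ ρ' s t) (hX : HasDerivWithinAt X X' s t) :
    HasDerivWithinAt (fun τ => dotProduct (ρ τ) (X τ))
      (dotProduct ρ' (X t) + dotProduct (ρ t) X') s t := by
  have h1 := fun i => (hasDerivWithinAt_pi.1 hρ i)
  have h2 := fun i => (hasDerivWithinAt_pi.1 hX i)
  simp only [dotProduct]
  have h3 := HasDerivWithinAt.fun_sum (u := Finset.univ)
    (A := fun i τ => ρ τ i * X τ i) (A' := fun i => ρ' i * X t i + ρ t i * X' i)
    (fun i _ => (h1 i).mul (h2 i))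
  rw [← Finset.sum_add_distrib]
  exact h3

lemma integrand_zero_of_integral_zero {a b : ℝ} (hltab : a < b) {q : ℝ → ℝ}
    (hq : ContinuousOn q (Icc a b)) (hq0 : ∀ t ∈ Icc a b, 0 ≤ q t)
    (hint : (∫ t in a..b, q t) = 0) : ∀ t ∈ Icc a b, q t = 0 := by
  by_contra hcon
  push_neg at hcon
  obtain ⟨s, hs, hqs⟩ := hcon
  have hab : a ≤ b := hltab.le
  have hspos : 0 < q s := lt_of_le_of_ne (hq0 s hs) (Ne.symm hqs)
  obtain ⟨δ, hδ, hδb⟩ := Metric.continuousWithinAt_iff.1 (hq s hs) (q s / 2) (by linarith)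
  set c := max a (s - δ / 2) with hc
  set d := min b (s + δ / 2) with hd
  have hac : a ≤ c := le_max_left _ _
  have hcs : c ≤ s := max_le hs.1 (by linarith)
  have hsd : s ≤ d := le_min hs.2 (by linarith)
  have hdb : d ≤ b := min_le_left _ _
  have hcd : c < d := by
    rcases lt_or_eq_of_le hs.2 with h | h
    · exact lt_of_le_of_lt hcs (lt_min h (by linarith))
    · have hlt : a < s := h ▸ hltab
      exact lt_of_lt_of_le (max_lt hlt (by linarith)) hsd
  have hmem : ∀ t ∈ Icc c d, t ∈ Icc a b := fun t htt => ⟨hac.trans htt.1, htt.2.trans hdb⟩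
  have hlow : ∀ t ∈ Icc c d, q s / 2 ≤ q t := by
    intro t htt
    have h1 : dist t s < δ := by
      rw [Real.dist_eq, abs_lt]
      constructor
      · have := htt.1; have : s - δ/2 ≤ t := le_trans (le_max_right _ _) htt.1; linarith
      · have : t ≤ s + δ/2 := le_trans htt.2 (min_le_right _ _); linarith
    have := hδb (hmem t htt) h1
    rw [Real.dist_eq, abs_lt] at this
    linarith [this.1]
  have hint1 : IntervalIntegrable q MeasureTheory.volume a c :=
    (hq.mono (fun t htt => ⟨htt.1, htt.2.trans (hcs.trans hs.2)⟩)).intervalIntegrable_of_Icc hac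
  have hint2 : IntervalIntegrable q MeasureTheory.volume c d :=
    (hq.mono hmem).intervalIntegrable_of_Icc hcd.le
  have hint3 : IntervalIntegrable q MeasureTheory.volume d b :=
    (hq.mono (fun t htt => ⟨(hac.trans hcd.le).trans htt.1, htt.2⟩)).intervalIntegrable_of_Icc hdb
  have hsplit : (∫ t in a..b, q t) = (∫ t in a..c, q t) + (∫ t in c..d, q t) + (∫ t in d..b, q t) := by
    rw [intervalIntegral.integral_add_adjacent_intervals hint1 hint2,
      intervalIntegral.integral_add_adjacent_intervals (hint1.trans hint2) hint3]
  have h1 : 0 ≤ ∫ t in a..c, q t :=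
    intervalIntegral.integral_nonneg hac (fun u hu => hq0 u ⟨hu.1, hu.2.trans (hcs.trans hs.2)⟩)
  have h3 : 0 ≤ ∫ t in d..b, q t :=
    intervalIntegral.integral_nonneg hdb (fun u hu => hq0 u ⟨(hac.trans hcd.le).trans hu.1, hu.2⟩)
  have h2 : (d - c) * (q s / 2) ≤ ∫ t in c..d, q t := by
    have := intervalIntegral.integral_mono_on hcd.le (intervalIntegrable_const (c := q s / 2))
      hint2 hlow
    rwa [intervalIntegral.integral_const, smul_eq_mul] at this
  have hpos : 0 < (d - c) * (q s / 2) := by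
    apply mul_pos (by linarith) (by linarith)
  linarith [hsplit ▸ hint]

end C

section D
open Set Matrix

lemma contOn_dot {p : ℕ} {s : Set ℝ} {u w : ℝ → Fin p → ℝ} (hu : ContinuousOn u s)
    (hw : ContinuousOn w s) : ContinuousOn (fun t => dotProduct (u t) (w t)) s := by
  simp only [dotProduct]
  exact continuousOn_finset_sum _ fun j _ =>
    ((continuous_apply j).comp_continuousOn hu).mul ((continuous_apply j).comp_continuousOn hw)

/-- Normality criterion (Sec. 2.7): the endpoint map `U ↦ X_U(t₁)` of the linear
control system `X' = A(t)X + B(t)U(t)`, `X(t₀) = 0`, is surjective onto `ℝⁿ` iff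
the only solution of the adjoint equation `ρ' = -A(t)ᵀρ` with `B(t)ᵀρ(t) ≡ 0` on
`[t₀,t₁]` has `ρ(t₁) = 0`. -/
theorem stmt_7 (n r : ℕ) (t₀ t₁ : ℝ) (ht : t₀ < t₁)
    (A : ℝ → Matrix (Fin n) (Fin n) ℝ) (B : ℝ → Matrix (Fin n) (Fin r) ℝ)
    (hA : ContinuousOn A (Icc t₀ t₁)) (hB : ContinuousOn B (Icc t₀ t₁)) :
    (∀ v : Fin n → ℝ, ∃ U : ℝ → Fin r → ℝ, ContinuousOn U (Icc t₀ t₁) ∧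
      ∃ X : ℝ → Fin n → ℝ,
        (∀ t ∈ Icc t₀ t₁,
          HasDerivWithinAt X ((A t).mulVec (X t) + (B t).mulVec (U t)) (Icc t₀ t₁) t) ∧
        X t₀ = 0 ∧ X t₁ = v) ↔
    (∀ ρ : ℝ → Fin n → ℝ,
      (∀ t ∈ Icc t₀ t₁,
        HasDerivWithinAt ρ (-((A t)ᵀ.mulVec (ρ t))) (Icc t₀ t₁) t) →
      (∀ t ∈ Icc t₀ t₁, (B t)ᵀ.mulVec (ρ t) = 0) → ρ t₁ = 0) := by
  constructor
  · -- surjectivity ⇒ normality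
    intro hS ρ hρd hρB
    have key : ∀ v : Fin n → ℝ, dotProduct (ρ t₁) v = 0 := by
      intro v
      obtain ⟨U, hU, X, hXd, hX0, hX1⟩ := hS v
      have hφd : ∀ t ∈ Icc t₀ t₁,
          HasDerivWithinAt (fun τ => dotProduct (ρ τ) (X τ)) 0 (Icc t₀ t₁) t := by
        intro t ht'
        have h := hasDerivWithinAt_dot (hρd t ht') (hXd t ht')
        have e1 : dotProduct (ρ t) ((A t).mulVec (X t))
            = dotProduct ((A t)ᵀ.mulVec (ρ t)) (X t) := by
          rw [dotProduct_mulVec, mulVec_transpose]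
        have e2 : dotProduct (ρ t) ((B t).mulVec (U t)) = 0 := by
          rw [dotProduct_mulVec, ← mulVec_transpose, hρB t ht', zero_dotProduct]
        have e : dotProduct (-(A t)ᵀ.mulVec (ρ t)) (X t)
            + dotProduct (ρ t) ((A t).mulVec (X t) + (B t).mulVec (U t)) = 0 := by
          rw [dotProduct_add, e1, e2, neg_dotProduct]; ring
        rwa [e] at h
      have hφc : ContinuousOn (fun τ => dotProduct (ρ τ) (X τ)) (Icc t₀ t₁) :=
        fun t ht' => (hφd t ht').continuousWithinAt
      have hconst := constant_of_has_deriv_right_zero hφc (fun x hx =>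
        (hφd x (Ico_subset_Icc_self hx)).mono_of_mem_nhdsWithin (Icc_mem_nhdsGE_of_mem hx))
      have h1 := hconst t₁ ⟨ht.le, le_refl t₁⟩
      rw [hX0, hX1, dotProduct_zero] at h1
      exact h1
    have := key (ρ t₁)
    rwa [dotProduct_self_eq_zero] at this
  · -- normality ⇒ surjectivity
    intro hN v
    set e := WithLp.linearEquiv 2 ℝ (Fin n → ℝ) with he
    let V : Submodule ℝ (Fin n → ℝ) :=
      { carrier := {w | ∃ U : ℝ → Fin r → ℝ, ContinuousOn U (Icc t₀ t₁) ∧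
          ∃ X : ℝ → Fin n → ℝ,
            (∀ t ∈ Icc t₀ t₁,
              HasDerivWithinAt X ((A t).mulVec (X t) + (B t).mulVec (U t)) (Icc t₀ t₁) t) ∧
            X t₀ = 0 ∧ X t₁ = w}
        zero_mem' := ⟨0, continuousOn_const, 0, fun t ht' => by
          exact (hasDerivWithinAt_const t (Icc t₀ t₁) (0 : Fin n → ℝ)).congr_deriv (by simp),
          rfl, rfl⟩
        add_mem' := by
          rintro x y ⟨U1, hU1, X1, hX1d, hX10, hX11⟩ ⟨U2, hU2, X2, hX2d, hX20, hX21⟩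
          refine ⟨U1 + U2, hU1.add hU2, X1 + X2, fun t ht' => ?_,
            by simp [hX10, hX20], by simp [hX11, hX21]⟩
          have h := (hX1d t ht').add (hX2d t ht')
          refine h.congr_deriv ?_
          simp only [Pi.add_apply, Matrix.mulVec_add]
          abel
        smul_mem' := by
          rintro c x ⟨U1, hU1, X1, hX1d, hX10, hX11⟩
          refine ⟨c • U1, hU1.const_smul c, c • X1, fun t ht' => ?_,
            by simp [hX10], by simp [hX11]⟩
          have h := (hX1d t ht').const_smul c
          refine h.congr_deriv ?_
          simp only [Pi.smul_apply, Matrix.mulVec_smul, smul_add] }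
    set V' : Submodule ℝ (EuclideanSpace ℝ (Fin n)) := V.comap (e : _ →ₗ[ℝ] _) with hV'
    by_cases htop : V' = ⊤
    · have h1 : e.symm v ∈ V' := htop ▸ Submodule.mem_top
      have h2 : e (e.symm v) ∈ V := h1
      rwa [LinearEquiv.apply_symm_apply] at h2
    · have horth : V'ᗮ ≠ ⊥ := fun h => htop (Submodule.orthogonal_eq_bot_iff.1 h)
      obtain ⟨w, hwV, hw0⟩ := Submodule.exists_mem_ne_zero_of_ne_bot horth
      set wv : Fin n → ℝ := e w with hwv
      have hperp : ∀ x ∈ V, dotProduct x wv = 0 := by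
        intro x hx
        have h1 : e.symm x ∈ V' := by
          simp only [hV', Submodule.mem_comap]
          rwa [LinearEquiv.coe_coe, LinearEquiv.apply_symm_apply]
        have h2 := (Submodule.mem_orthogonal V' w).1 hwV (e.symm x) h1
        have h3 : dotProduct x wv = inner ℝ (e.symm x) w := by
          rw [PiLp.inner_apply]
          simp only [RCLike.inner_apply, starRingEnd_apply, star_trivial]
          exact Finset.sum_congr rfl fun i _ => mul_comm _ _
        rw [h3, h2]
      -- construct the adjoint solution with terminal value wv
      have hAT : ContinuousOn (fun t => (A t)ᵀ) (Icc t₀ t₁) :=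
        (Continuous.matrix_transpose continuous_id).comp_continuousOn hA
      have hBT : ContinuousOn (fun t => (B t)ᵀ) (Icc t₀ t₁) :=
        (Continuous.matrix_transpose continuous_id).comp_continuousOn hB
      obtain ⟨ρ, hρ1, hρd⟩ := linear_ode_exists_backward ht.le hAT wv
      have hρc : ContinuousOn ρ (Icc t₀ t₁) := fun t ht' => (hρd t ht').continuousWithinAt
      set Uw : ℝ → Fin r → ℝ := fun t => (B t)ᵀ.mulVec (ρ t) with hUw
      have hUwc : ContinuousOn Uw (Icc t₀ t₁) := contOn_mulVec hBT hρc
      have hfwc : ContinuousOn (fun t => (B t).mulVec (Uw t)) (Icc t₀ t₁) :=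
        contOn_mulVec hB hUwc
      obtain ⟨X, hX0, hXd⟩ := linear_ode_exists ht.le hA hfwc (0 : Fin n → ℝ)
      have hXc : ContinuousOn X (Icc t₀ t₁) := fun t ht' => (hXd t ht').continuousWithinAt
      have hmemV : X t₁ ∈ V := ⟨Uw, hUwc, X, hXd, hX0, rfl⟩
      have hdot0 : dotProduct (X t₁) wv = 0 := hperp _ hmemV
      have hφd : ∀ t ∈ Icc t₀ t₁,
          HasDerivWithinAt (fun τ => dotProduct (ρ τ) (X τ))
            (dotProduct (Uw t) (Uw t)) (Icc t₀ t₁) t := by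
        intro t ht'
        have h := hasDerivWithinAt_dot (hρd t ht') (hXd t ht')
        have e1 : dotProduct (ρ t) ((A t).mulVec (X t))
            = dotProduct ((A t)ᵀ.mulVec (ρ t)) (X t) := by
          rw [dotProduct_mulVec, mulVec_transpose]
        have e2 : dotProduct (ρ t) ((B t).mulVec (Uw t)) = dotProduct (Uw t) (Uw t) := by
          rw [dotProduct_mulVec, ← mulVec_transpose]
        have e3 : dotProduct (-(A t)ᵀ.mulVec (ρ t)) (X t)
            + dotProduct (ρ t) ((A t).mulVec (X t) + (B t).mulVec (Uw t))
            = dotProduct (Uw t) (Uw t) := by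
          rw [dotProduct_add, e1, e2, neg_dotProduct]; ring
        rwa [e3] at h
      have hφc : ContinuousOn (fun τ => dotProduct (ρ τ) (X τ)) (Icc t₀ t₁) :=
        contOn_dot hρc hXc
      have hqc : ContinuousOn (fun τ => dotProduct (Uw τ) (Uw τ)) (Icc t₀ t₁) :=
        contOn_dot hUwc hUwc
      have hFTC : (∫ τ in t₀..t₁, dotProduct (Uw τ) (Uw τ))
          = dotProduct (ρ t₁) (X t₁) - dotProduct (ρ t₀) (X t₀) := by
        apply intervalIntegral.integral_eq_sub_of_hasDeriv_right_of_le ht.le hφc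
        · intro x hx
          exact (hφd x (Ioo_subset_Icc_self hx)).mono_of_mem_nhdsWithin
            (Icc_mem_nhdsGT_of_mem ⟨hx.1.le, hx.2⟩)
        · exact hqc.intervalIntegrable_of_Icc ht.le
      rw [hρ1, hX0, dotProduct_zero, sub_zero, ← dotProduct_comm, hdot0] at hFTC
      have hUz : ∀ t ∈ Icc t₀ t₁, (B t)ᵀ.mulVec (ρ t) = 0 := by
        intro t ht'
        have hz := integrand_zero_of_integral_zero ht hqc
          (fun u _ => by
            simpa [dotProduct] using
              Finset.sum_nonneg fun j _ => mul_self_nonneg (Uw u j)) hFTC t ht'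
        exact dotProduct_self_eq_zero.1 hz
      have := hN ρ hρd hUz
      rw [hρ1] at this
      exact absurd ((LinearEquiv.map_eq_zero_iff e).1 (hwv ▸ this)) hw0
end D
end

section
/- Gauge invariance of Pontryagin's system: let f : ℝ × ℝⁿ → ℝ be C², and suppose (q(t), z(t), p(t)) solves q' = ψ, p_i' = ∂L/∂q^i − p_k ∂ψ^k/∂q^i, p_i ∂ψ^i/∂z^A = ∂L/∂z^A. Define L̃ := L + ∂f/∂t + (∂f/∂q^k) ψ^k and p̃_i(t) := p_i(t) + (∂f/∂q^i)(t, q(t)). Then (q(t), z(t), p̃(t)) solves the same system with L replaced by L̃. -/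
open Set

/-- Pontryagin's system (3.10a,b,c) along a curve `(q, z, p)` on `[t₀,t₁]`, with
partial derivatives expressed as Fréchet derivatives of the coordinate slices. -/
def PontrSys (n r : ℕ) (t₀ t₁ : ℝ)
    (ψ : ℝ → (Fin n → ℝ) → (Fin r → ℝ) → Fin n → ℝ)
    (L : ℝ → (Fin n → ℝ) → (Fin r → ℝ) → ℝ)
    (q : ℝ → Fin n → ℝ) (z : ℝ → Fin r → ℝ) (p : ℝ → Fin n → ℝ) : Prop :=
  (∀ t ∈ Icc t₀ t₁, ∀ i : Fin n,
    HasDerivAt (fun u => q u i) (ψ t (q t) (z t) i) t) ∧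
  (∀ t ∈ Icc t₀ t₁, ∀ i : Fin n,
    HasDerivAt (fun u => p u i)
      (fderiv ℝ (fun q' => L t q' (z t)) (q t) ((Pi.single i 1 : Fin n → ℝ))
        - ∑ k, p t k *
          fderiv ℝ (fun q' => ψ t q' (z t) k) (q t) ((Pi.single i 1 : Fin n → ℝ))) t) ∧
  (∀ t ∈ Icc t₀ t₁, ∀ A : Fin r,
    (∑ i, p t i *
      fderiv ℝ (fun z' => ψ t (q t) z' i) (z t) ((Pi.single A 1 : Fin r → ℝ)))
    = fderiv ℝ (fun z' => L t (q t) z') (z t) ((Pi.single A 1 : Fin r → ℝ)))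

/-- Gauge invariance (3.12): adding the total time derivative of `f(t,q)` to the
Lagrangian, `L̃ = L + ∂f/∂t + (∂f/∂q^k)ψ^k`, and shifting the momenta,
`p̃_i = p_i + ∂f/∂q^i`, maps solutions of Pontryagin's system to solutions. -/
theorem stmt_15 (n r : ℕ) (t₀ t₁ : ℝ)
    (ψ : ℝ → (Fin n → ℝ) → (Fin r → ℝ) → Fin n → ℝ)
    (L : ℝ → (Fin n → ℝ) → (Fin r → ℝ) → ℝ)
    (hψ : ∀ i, Differentiable ℝ
      (fun x : ℝ × (Fin n → ℝ) × (Fin r → ℝ) => ψ x.1 x.2.1 x.2.2 i))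
    (hL : Differentiable ℝ
      (fun x : ℝ × (Fin n → ℝ) × (Fin r → ℝ) => L x.1 x.2.1 x.2.2))
    (f : ℝ → (Fin n → ℝ) → ℝ)
    (hf : ContDiff ℝ 2 (fun x : ℝ × (Fin n → ℝ) => f x.1 x.2))
    (q : ℝ → Fin n → ℝ) (z : ℝ → Fin r → ℝ) (p : ℝ → Fin n → ℝ)
    (hsys : PontrSys n r t₀ t₁ ψ L q z p) :
    PontrSys n r t₀ t₁ ψ
      (fun t q' z' => L t q' z'
        + fderiv ℝ (fun x : ℝ × (Fin n → ℝ) => f x.1 x.2) (t, q') (1, 0)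
        + ∑ k, fderiv ℝ (fun x : ℝ × (Fin n → ℝ) => f x.1 x.2) (t, q')
            (0, Pi.single k 1) * ψ t q' z' k)
      q z
      (fun u i => p u i
        + fderiv ℝ (fun x : ℝ × (Fin n → ℝ) => f x.1 x.2) (u, q u)
            (0, Pi.single i 1)) := by
  obtain ⟨hq, hp, hz⟩ := hsys
  set F : ℝ × (Fin n → ℝ) → ℝ := fun x => f x.1 x.2 with hFdef
  have hFd : Differentiable ℝ F := hf.differentiable two_ne_zero
  have hDF : Differentiable ℝ (fderiv ℝ F) :=
    (hf.fderiv_right (m := 1) (by norm_num)).differentiable one_ne_zero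
  have symm : ∀ x v w : ℝ × (Fin n → ℝ),
      fderiv ℝ (fderiv ℝ F) x v w = fderiv ℝ (fderiv ℝ F) x w v := fun x v w =>
    second_derivative_symmetric (fun y => (hFd y).hasFDerivAt) ((hDF x).hasFDerivAt) v w
  refine ⟨hq, ?_, ?_⟩
  · -- momentum equation
    intro t ht i
    set ψt := ψ t (q t) (z t) with hψt
    have hqv : HasDerivAt q ψt t := hasDerivAt_pi.2 (hq t ht)
    have hγ : HasDerivAt (fun u => ((u, q u) : ℝ × (Fin n → ℝ))) (1, ψt) t :=
      (hasDerivAt_id t).prodMk hqv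
    have hD2γ : HasDerivAt (fun u => fderiv ℝ F (u, q u))
        (fderiv ℝ (fderiv ℝ F) (t, q t) (1, ψt)) t :=
      (hDF (t, q t)).hasFDerivAt.comp_hasDerivAt t hγ
    have hgd : HasDerivAt (fun u => fderiv ℝ F (u, q u) (0, Pi.single i 1))
        (fderiv ℝ (fderiv ℝ F) (t, q t) (1, ψt) (0, Pi.single i 1)) t := by
      exact
        ((ContinuousLinearMap.apply ℝ ℝ ((0, Pi.single i 1) : ℝ × (Fin n → ℝ))).hasFDerivAt.comp_hasDerivAt
          t hD2γ)
    -- slice derivatives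
    set J := (0 : (Fin n → ℝ) →L[ℝ] ℝ).prod (ContinuousLinearMap.id ℝ (Fin n → ℝ)) with hJ
    have hι : HasFDerivAt (fun q' : Fin n → ℝ => ((t, q') : ℝ × (Fin n → ℝ))) J (q t) :=
      (hasFDerivAt_const t (q t)).prodMk (hasFDerivAt_id (q t))
    have hembq : DifferentiableAt ℝ
        (fun q' : Fin n → ℝ => ((t, q', z t) : ℝ × (Fin n → ℝ) × (Fin r → ℝ))) (q t) :=
      (differentiableAt_const t).prodMk
        (differentiableAt_id.prodMk (differentiableAt_const (z t)))
    have hLq : DifferentiableAt ℝ (fun q' => L t q' (z t)) (q t) :=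
      ((hL (t, q t, z t)).comp (q t) hembq :)
    have hψq : ∀ k, DifferentiableAt ℝ (fun q' => ψ t q' (z t) k) (q t) := fun k =>
      ((hψ k (t, q t, z t)).comp (q t) hembq :)
    set Tw := fun w : ℝ × (Fin n → ℝ) =>
      (ContinuousLinearMap.apply ℝ ℝ w).comp
        ((fderiv ℝ (fderiv ℝ F) (t, q t)).comp J) with hTw
    have hg : ∀ w : ℝ × (Fin n → ℝ),
        HasFDerivAt (fun q' => fderiv ℝ F (t, q') w) (Tw w) (q t) := fun w =>
      ((ContinuousLinearMap.apply ℝ ℝ w).hasFDerivAt).comp (q t)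
        ((hDF (t, q t)).hasFDerivAt.comp (q t) hι)
    have H : HasFDerivAt
        (fun q' => L t q' (z t) + fderiv ℝ F (t, q') (1, 0)
          + ∑ k, fderiv ℝ F (t, q') (0, Pi.single k 1) * ψ t q' (z t) k)
        (fderiv ℝ (fun q' => L t q' (z t)) (q t) + Tw (1, 0) + ∑ k, (fderiv ℝ F (t, q t) (0, Pi.single k 1) •
            fderiv ℝ (fun q' => ψ t q' (z t) k) (q t)
          + ψ t (q t) (z t) k • Tw (0, Pi.single k 1))) (q t) :=
      (hLq.hasFDerivAt.add (hg (1, 0))).add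
        (HasFDerivAt.fun_sum fun k _ => (hg (0, Pi.single k 1)).mul (hψq k).hasFDerivAt)
    have hrate := (hp t ht i).add hgd
    convert hrate using 1
    case e'_4 => exact rfl
    case e'_5 => exact rfl
    case e'_8 => exact rfl
    have hTwv : ∀ (w : ℝ × (Fin n → ℝ)) (v : Fin n → ℝ),
        Tw w v = fderiv ℝ (fderiv ℝ F) (t, q t) (0, v) w := by
      intro w v; rw [hTw, hJ]; simp
    have hdecomp : ((1, ψt) : ℝ × (Fin n → ℝ))
        = (1, 0) + ∑ k, ψt k • ((0, Pi.single k 1) : ℝ × (Fin n → ℝ)) := by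
      have h2 : ∑ k, ψt k • (Pi.single k 1 : Fin n → ℝ) = ψt := by
        have := Finset.univ_sum_single ψt
        rw [← this]
        refine Finset.sum_congr rfl fun k _ => ?_
        ext j
        simp [Pi.single_apply]
      apply Prod.ext
      · simp [Prod.fst_sum]
      · simp [Prod.snd_sum, h2]
    rw [H.fderiv]
    simp only [ContinuousLinearMap.add_apply, ContinuousLinearMap.coe_sum',
      Finset.sum_apply, ContinuousLinearMap.smul_apply, smul_eq_mul, hTwv]
    rw [symm (t, q t) (1, ψt) ((0, Pi.single i 1) : ℝ × (Fin n → ℝ)), hdecomp,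
      map_add, map_sum]
    simp only [map_smul, smul_eq_mul, add_mul, Finset.sum_add_distrib]
    ring
  · -- z equation
    intro t ht A
    set DL := fderiv ℝ (fun z' => L t (q t) z') (z t) with hDL
    have hembz : DifferentiableAt ℝ
        (fun z' : Fin r → ℝ => ((t, q t, z') : ℝ × (Fin n → ℝ) × (Fin r → ℝ))) (z t) :=
      (differentiableAt_const t).prodMk
        ((differentiableAt_const (q t)).prodMk differentiableAt_id)
    have hLz : DifferentiableAt ℝ (fun z' => L t (q t) z') (z t) :=
      ((hL (t, q t, z t)).comp (z t) hembz :)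
    have hψz : ∀ k, DifferentiableAt ℝ (fun z' => ψ t (q t) z' k) (z t) := fun k =>
      ((hψ k (t, q t, z t)).comp (z t) hembz :)
    set Dψ := fun k => fderiv ℝ (fun z' => ψ t (q t) z' k) (z t) with hDψ
    have H : HasFDerivAt
        (fun z' => L t (q t) z' + fderiv ℝ F (t, q t) (1, 0)
          + ∑ k, fderiv ℝ F (t, q t) (0, Pi.single k 1) * ψ t (q t) z' k)
        (DL + 0 + ∑ k, (fderiv ℝ F (t, q t) (0, Pi.single k 1) • Dψ k
          + ψ t (q t) (z t) k • (0 : (Fin r → ℝ) →L[ℝ] ℝ))) (z t) := by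
      exact (hLz.hasFDerivAt.add (hasFDerivAt_const _ _)).add
        (HasFDerivAt.fun_sum fun k _ =>
          (hasFDerivAt_const (fderiv ℝ F (t, q t) (0, Pi.single k 1)) (z t)).mul
            (hψz k).hasFDerivAt)
    have := H.fderiv
    show (∑ i, (p t i + fderiv ℝ F (t, q t) (0, Pi.single i 1)) * Dψ i (Pi.single A 1))
      = fderiv ℝ (fun z' => L t (q t) z' + fderiv ℝ F (t, q t) (1, 0)
          + ∑ k, fderiv ℝ F (t, q t) (0, Pi.single k 1) * ψ t (q t) z' k) (z t) (Pi.single A 1)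
    rw [this]
    simp only [ContinuousLinearMap.add_apply, ContinuousLinearMap.coe_sum',
      Finset.sum_apply, ContinuousLinearMap.smul_apply, ContinuousLinearMap.zero_apply,
      smul_eq_mul, mul_zero, zero_add, add_zero]
    have hz' := hz t ht A
    rw [← hDL, ← hDψ] at *
    simp only [add_mul]
    rw [Finset.sum_add_distrib, hz']
end
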